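/- Let Y and Y′ be random variables measurable with respect to sub-σ-algebras A and A′ respectively, and let f be a bounded nonnegative jointly measurable function of the pair, say 0 ≤ f ≤ M. Let (Ỹ, Ỹ′) be a pair where Ỹ and Ỹ′ are independent with the same marginal distributions as Y and Y′. Then |E f(Y, Y′) − E f(Ỹ, Ỹ′)| ≤ 2M · β(A, A′). -/

import Mathlib

open MeasureTheory

/-- The β-mixing (absolute regularity) coefficient between two sub-σ-algebras. -/
noncomputable def betaMix {Ω : Type*} [MeasurableSpace Ω] (μ : Measure Ω)
    (𝓐 𝓑 : MeasurableSpace Ω) : ℝ :=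
  sSup {x : ℝ | ∃ (n m : ℕ) (A : Fin n → Set Ω) (B : Fin m → Set Ω),
    (∀ i, MeasurableSet[𝓐] (A i)) ∧ (∀ j, MeasurableSet[𝓑] (B j)) ∧
    Pairwise (Function.onFun Disjoint A) ∧ Pairwise (Function.onFun Disjoint B) ∧
    (⋃ i, A i) = Set.univ ∧ (⋃ j, B j) = Set.univ ∧
    x = (1 / 2) * ∑ i, ∑ j,
      |(μ (A i ∩ B j)).toReal - (μ (A i)).toReal * (μ (B j)).toReal|}

open Set

namespace BetaMixAux

variable {E : Type*}

def atom {n : ℕ} (C : Fin n → Set E) (σ : Fin n → Bool) : Set E :=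
  ⋂ k, if σ k then C k else (C k)ᶜ

lemma atom_subset {n : ℕ} {C : Fin n → Set E} {σ : Fin n → Bool} {k : Fin n}
    (h : σ k = true) : atom C σ ⊆ C k := by
  have := Set.iInter_subset (fun k => if σ k then C k else (C k)ᶜ) k
  rwa [if_pos h] at this

lemma atom_subset_compl {n : ℕ} {C : Fin n → Set E} {σ : Fin n → Bool} {k : Fin n}
    (h : σ k = false) : atom C σ ⊆ (C k)ᶜ := by
  have := Set.iInter_subset (fun k => if σ k then C k else (C k)ᶜ) k
  rwa [if_neg (by simp [h])] at this

lemma measurableSet_atom {m : MeasurableSpace E} {n : ℕ} {C : Fin n → Set E}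
    (hC : ∀ k, MeasurableSet (C k)) (σ : Fin n → Bool) : MeasurableSet (atom C σ) := by
  refine MeasurableSet.iInter fun k => ?_
  cases h : σ k
  · simpa using (hC k).compl
  · simpa using hC k

lemma iUnion_atom {n : ℕ} (C : Fin n → Set E) : ⋃ σ, atom C σ = Set.univ := by
  classical
  ext x
  simp only [Set.mem_iUnion, Set.mem_univ, iff_true]
  refine ⟨fun k => decide (x ∈ C k), Set.mem_iInter.2 fun k => ?_⟩
  by_cases h : x ∈ C k
  · rw [if_pos (by simpa using h)]; exact h
  · rw [if_neg (by simpa using h)]; exact h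

lemma exists_mem_atom {n : ℕ} (C : Fin n → Set E) (x : E) : ∃ σ, x ∈ atom C σ := by
  have := iUnion_atom C
  have hx : x ∈ ⋃ σ, atom C σ := by rw [this]; trivial
  exact Set.mem_iUnion.1 hx

lemma pairwise_disjoint_atom {n : ℕ} (C : Fin n → Set E) :
    Pairwise (Function.onFun Disjoint (atom C)) := by
  intro σ τ hστ
  obtain ⟨k, hk⟩ : ∃ k, σ k ≠ τ k := by
    by_contra h
    push_neg at h
    exact hστ (funext h)
  refine Set.disjoint_left.2 fun x hxσ hxτ => ?_
  cases hσ : σ k <;> cases hτ : τ k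
  · exact hk (hσ.trans hτ.symm)
  · exact atom_subset_compl hσ hxσ (atom_subset hτ hxτ)
  · exact atom_subset_compl hτ hxτ (atom_subset hσ hxσ)
  · exact hk (hσ.trans hτ.symm)

variable {E' : Type*}

/-- The family of finite unions of measurable rectangles. -/
def RectFam (E E' : Type*) [MeasurableSpace E] [MeasurableSpace E'] : Set (Set (E × E')) :=
  {U | ∃ (n : ℕ) (C : Fin n → Set E) (D : Fin n → Set E'),
    (∀ k, MeasurableSet (C k)) ∧ (∀ k, MeasurableSet (D k)) ∧ U = ⋃ k, C k ×ˢ D k}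

section Rect

variable [MeasurableSpace E] [MeasurableSpace E']

lemma measurableSet_of_mem_rectFam {U : Set (E × E')} (hU : U ∈ RectFam E E') :
    MeasurableSet U := by
  obtain ⟨n, C, D, hC, hD, rfl⟩ := hU
  exact MeasurableSet.iUnion fun k => (hC k).prod (hD k)

omit [MeasurableSpace E] [MeasurableSpace E'] in
lemma inter_atomRect {n : ℕ} (C : Fin n → Set E) (D : Fin n → Set E')
    (σ ρ : Fin n → Bool) [Decidable (∃ k, σ k = true ∧ ρ k = true)] :
    (⋃ k, C k ×ˢ D k) ∩ (atom C σ ×ˢ atom D ρ)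
      = if ∃ k, σ k = true ∧ ρ k = true then atom C σ ×ˢ atom D ρ else ∅ := by
  split_ifs with hP
  · obtain ⟨k, h1, h2⟩ := hP
    exact Set.inter_eq_self_of_subset_right
      ((Set.prod_mono (atom_subset h1) (atom_subset h2)).trans (Set.subset_iUnion (fun k => C k ×ˢ D k) k))
  · refine Set.eq_empty_of_forall_notMem ?_
    rintro ⟨a, b⟩ ⟨hU, hab⟩
    obtain ⟨ha, hb⟩ := hab
    obtain ⟨k, hk⟩ := Set.mem_iUnion.1 hU
    obtain ⟨hak, hbk⟩ := hk
    refine hP ⟨k, ?_, ?_⟩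
    · cases h : σ k
      · exact absurd hak (atom_subset_compl h ha)
      · rfl
    · cases h : ρ k
      · exact absurd hbk (atom_subset_compl h hb)
      · rfl

omit [MeasurableSpace E] [MeasurableSpace E'] in
lemma iUnion_atomRect {n : ℕ} (C : Fin n → Set E) (D : Fin n → Set E') :
    ⋃ q : (Fin n → Bool) × (Fin n → Bool), atom C q.1 ×ˢ atom D q.2 = Set.univ := by
  ext ⟨a, b⟩
  simp only [Set.mem_iUnion, Set.mem_univ, iff_true]
  obtain ⟨σ, hσ⟩ := exists_mem_atom C a
  obtain ⟨ρ, hρ⟩ := exists_mem_atom D b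
  exact ⟨(σ, ρ), hσ, hρ⟩

omit [MeasurableSpace E] [MeasurableSpace E'] in
lemma pairwise_disjoint_atomRect {n : ℕ} (C : Fin n → Set E) (D : Fin n → Set E') :
    Pairwise (Function.onFun Disjoint
      (fun q : (Fin n → Bool) × (Fin n → Bool) => atom C q.1 ×ˢ atom D q.2)) := by
  intro q q' hqq'
  refine Set.disjoint_left.2 ?_
  rintro ⟨a, b⟩ ⟨ha, hb⟩ ⟨ha', hb'⟩
  have h1 : q.1 = q'.1 := by
    by_contra h
    exact Set.disjoint_left.1 (pairwise_disjoint_atom C h) ha ha'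
  have h2 : q.2 = q'.2 := by
    by_contra h
    exact Set.disjoint_left.1 (pairwise_disjoint_atom D h) hb hb'
  exact hqq' (Prod.ext h1 h2)

lemma isSetAlgebra_rectFam : IsSetAlgebra (RectFam E E') where
  empty_mem := ⟨0, Fin.elim0, Fin.elim0, fun k => k.elim0, fun k => k.elim0, by
    rw [Set.iUnion_of_empty]⟩
  compl_mem := by
    classical
    rintro U ⟨n, C, D, hC, hD, rfl⟩
    set Q := (Fin n → Bool) × (Fin n → Bool)
    set P : Q → Prop := fun q => ∃ k, q.1 k = true ∧ q.2 k = true with hPdef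
    set C' : Q → Set E := fun q => if P q then ∅ else atom C q.1 with hC'
    set D' : Q → Set E' := fun q => if P q then ∅ else atom D q.2 with hD'
    have hkey : (⋃ k, C k ×ˢ D k)ᶜ = ⋃ q : Q, C' q ×ˢ D' q := by
      ext x
      simp only [Set.mem_compl_iff, Set.mem_iUnion]
      constructor
      · intro hx
        obtain ⟨σ, hσ⟩ := exists_mem_atom C x.1
        obtain ⟨ρ, hρ⟩ := exists_mem_atom D x.2
        refine ⟨(σ, ρ), ?_⟩
        have hnP : ¬ P (σ, ρ) := by
          intro hP
          obtain ⟨k, h1, h2⟩ := hP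
          exact hx ⟨k, Set.mem_prod.2 ⟨atom_subset h1 hσ, atom_subset h2 hρ⟩⟩
        rw [hC', hD']
        simp only [if_neg hnP]
        exact ⟨hσ, hρ⟩
      · rintro ⟨q, hq⟩ hx
        by_cases hP : P q
        · rw [hC'] at hq
          simp only [if_pos hP] at hq
          exact absurd hq.1 (Set.notMem_empty _)
        · rw [hC', hD'] at hq
          simp only [if_neg hP] at hq
          obtain ⟨k, hk⟩ := hx
          refine hP ⟨k, ?_, ?_⟩
          · cases h : q.1 k
            · exact absurd hk.1 (atom_subset_compl h hq.1)
            · rfl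
          · cases h : q.2 k
            · exact absurd hk.2 (atom_subset_compl h hq.2)
            · rfl
    set e : Q ≃ Fin (Fintype.card Q) := Fintype.equivFin Q
    refine ⟨Fintype.card Q, fun i => C' (e.symm i), fun i => D' (e.symm i),
      fun i => ?_, fun i => ?_, ?_⟩
    · rw [hC']; dsimp only; split_ifs
      · exact MeasurableSet.empty
      · exact measurableSet_atom hC _
    · rw [hD']; dsimp only; split_ifs
      · exact MeasurableSet.empty
      · exact measurableSet_atom hD _
    · rw [hkey, ← Function.Surjective.iUnion_comp e.symm.surjective
        (fun q => C' q ×ˢ D' q)]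
  union_mem := by
    rintro U V ⟨n, C, D, hC, hD, rfl⟩ ⟨m, C', D', hC', hD', rfl⟩
    refine ⟨n + m, fun k => Sum.elim C C' (finSumFinEquiv.symm k),
      fun k => Sum.elim D D' (finSumFinEquiv.symm k), fun k => ?_, fun k => ?_, ?_⟩
    · rcases hk : finSumFinEquiv.symm k with i | i
      · simpa [hk] using hC i
      · simpa [hk] using hC' i
    · rcases hk : finSumFinEquiv.symm k with i | i
      · simpa [hk] using hD i
      · simpa [hk] using hD' i
    · rw [Function.Surjective.iUnion_comp (f := finSumFinEquiv.symm)
        finSumFinEquiv.symm.surjective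
        (fun s => Sum.elim C C' s ×ˢ Sum.elim D D' s), Set.iUnion_sum]
      simp only [Sum.elim_inl, Sum.elim_inr]

lemma generateFrom_rectFam :
    (Prod.instMeasurableSpace : MeasurableSpace (E × E'))
      = MeasurableSpace.generateFrom (RectFam E E') := by
  refine le_antisymm ?_ (MeasurableSpace.generateFrom_le fun U hU =>
    measurableSet_of_mem_rectFam hU)
  rw [← generateFrom_prod]
  refine MeasurableSpace.generateFrom_mono ?_
  rintro U ⟨s, hs, t, ht, rfl⟩
  exact ⟨1, fun _ => s, fun _ => t, fun _ => hs, fun _ => ht, (Set.iUnion_const _).symm⟩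

end Rect



lemma sum_part {Ω : Type*} {m0 : MeasurableSpace Ω} (μ : Measure Ω) [IsFiniteMeasure μ]
    {ι : Type*} [Fintype ι] {A : ι → Set Ω} (hA : ∀ i, MeasurableSet (A i))
    (hd : Pairwise (Function.onFun Disjoint A)) (hc : (⋃ i, A i) = Set.univ)
    (S : Set Ω) (hS : MeasurableSet S) :
    ∑ i, (μ (S ∩ A i)).toReal = (μ S).toReal := by
  have hdisj : Pairwise (Function.onFun Disjoint fun i => S ∩ A i) := by
    intro i j hij
    exact (hd hij).mono inter_subset_right inter_subset_right
  have hmeas : ∀ i, MeasurableSet (S ∩ A i) := fun i => hS.inter (hA i)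
  have h1 : μ S = ∑ i, μ (S ∩ A i) := by
    have := measure_iUnion (μ := μ) hdisj hmeas
    rw [tsum_fintype] at this
    rw [← this, ← Set.inter_iUnion, hc, Set.inter_univ]
  rw [h1, ENNReal.toReal_sum (fun i _ => measure_ne_top μ _)]

variable {Ω : Type*} {m0 : MeasurableSpace Ω} {μ : Measure Ω}
  {𝓐 𝓐' : MeasurableSpace Ω}

/-- The defining set of `betaMix` is bounded above (by 1), assuming the σ-algebras are
sub-σ-algebras of the ambient one. -/
lemma bddAbove_betaMix_set [IsProbabilityMeasure μ] (h𝓐 : 𝓐 ≤ m0) (h𝓐' : 𝓐' ≤ m0) :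
    BddAbove {x : ℝ | ∃ (n m : ℕ) (A : Fin n → Set Ω) (B : Fin m → Set Ω),
    (∀ i, MeasurableSet[𝓐] (A i)) ∧ (∀ j, MeasurableSet[𝓐'] (B j)) ∧
    Pairwise (Function.onFun Disjoint A) ∧ Pairwise (Function.onFun Disjoint B) ∧
    (⋃ i, A i) = Set.univ ∧ (⋃ j, B j) = Set.univ ∧
    x = (1 / 2) * ∑ i, ∑ j,
      |(μ (A i ∩ B j)).toReal - (μ (A i)).toReal * (μ (B j)).toReal|} := by
  refine ⟨1, ?_⟩
  rintro x ⟨n, m, A, B, hA, hB, hdA, hdB, hcA, hcB, rfl⟩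
  have hA0 : ∀ i, MeasurableSet[m0] (A i) := fun i => h𝓐 _ (hA i)
  have hB0 : ∀ j, MeasurableSet[m0] (B j) := fun j => h𝓐' _ (hB j)
  have key : ∑ i, ∑ j, |(μ (A i ∩ B j)).toReal - (μ (A i)).toReal * (μ (B j)).toReal| ≤ 2 := by
    have hbound : ∀ i j, |(μ (A i ∩ B j)).toReal - (μ (A i)).toReal * (μ (B j)).toReal|
        ≤ (μ (A i ∩ B j)).toReal + (μ (A i)).toReal * (μ (B j)).toReal := by
      intro i j
      refine (abs_sub _ _).trans ?_
      rw [abs_of_nonneg ENNReal.toReal_nonneg,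
        abs_of_nonneg (mul_nonneg ENNReal.toReal_nonneg ENNReal.toReal_nonneg)]
    calc ∑ i, ∑ j, |(μ (A i ∩ B j)).toReal - (μ (A i)).toReal * (μ (B j)).toReal|
        ≤ ∑ i, ∑ j, ((μ (A i ∩ B j)).toReal + (μ (A i)).toReal * (μ (B j)).toReal) := by
          refine Finset.sum_le_sum fun i _ => Finset.sum_le_sum fun j _ => hbound i j
      _ = (∑ i, ∑ j, (μ (A i ∩ B j)).toReal)
          + (∑ i, (μ (A i)).toReal) * (∑ j, (μ (B j)).toReal) := by
          rw [Finset.sum_mul]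
          rw [← Finset.sum_add_distrib]
          refine Finset.sum_congr rfl fun i _ => ?_
          rw [Finset.mul_sum, ← Finset.sum_add_distrib]
      _ ≤ 2 := by
          have h1 : ∑ i, ∑ j, (μ (A i ∩ B j)).toReal = 1 := by
            have : ∀ i, ∑ j, (μ (A i ∩ B j)).toReal = (μ (A i)).toReal := fun i =>
              sum_part μ hB0 hdB hcB (A i) (hA0 i)
            simp_rw [this]
            have := sum_part μ hA0 hdA hcA Set.univ (@MeasurableSet.univ Ω m0)
            simp only [Set.univ_inter] at this
            rw [this, measure_univ, ENNReal.toReal_one]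
          have h2 : ∑ i, (μ (A i)).toReal = 1 := by
            have := sum_part μ hA0 hdA hcA Set.univ (@MeasurableSet.univ Ω m0)
            simp only [Set.univ_inter] at this
            rw [this, measure_univ, ENNReal.toReal_one]
          have h3 : ∑ j, (μ (B j)).toReal = 1 := by
            have := sum_part μ hB0 hdB hcB Set.univ (@MeasurableSet.univ Ω m0)
            simp only [Set.univ_inter] at this
            rw [this, measure_univ, ENNReal.toReal_one]
          rw [h1, h2, h3]; norm_num
  linarith

lemma betaMix_nonneg [IsProbabilityMeasure μ] (h𝓐 : 𝓐 ≤ m0) (h𝓐' : 𝓐' ≤ m0) :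
    0 ≤ @betaMix Ω m0 μ 𝓐 𝓐' := by
  have hmem : (0 : ℝ) ∈ {x : ℝ | ∃ (n m : ℕ) (A : Fin n → Set Ω) (B : Fin m → Set Ω),
      (∀ i, MeasurableSet[𝓐] (A i)) ∧ (∀ j, MeasurableSet[𝓐'] (B j)) ∧
      Pairwise (Function.onFun Disjoint A) ∧ Pairwise (Function.onFun Disjoint B) ∧
      (⋃ i, A i) = Set.univ ∧ (⋃ j, B j) = Set.univ ∧
      x = (1 / 2) * ∑ i, ∑ j,
        |(μ (A i ∩ B j)).toReal - (μ (A i)).toReal * (μ (B j)).toReal|} := by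
    refine ⟨1, 1, fun _ => Set.univ, fun _ => Set.univ, fun _ => @MeasurableSet.univ Ω 𝓐,
      fun _ => @MeasurableSet.univ Ω 𝓐', Subsingleton.pairwise, Subsingleton.pairwise,
      Set.iUnion_const _, Set.iUnion_const _, ?_⟩
    simp [measure_univ]
  exact le_csSup (bddAbove_betaMix_set h𝓐 h𝓐') hmem

/-- Any finite-partition sum is at most `2 β`. -/
lemma sum_le_two_betaMix [IsProbabilityMeasure μ] (h𝓐 : 𝓐 ≤ m0) (h𝓐' : 𝓐' ≤ m0)
    {ι κ : Type*} [Fintype ι] [Fintype κ] {A : ι → Set Ω} {B : κ → Set Ω}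
    (hA : ∀ i, MeasurableSet[𝓐] (A i)) (hB : ∀ j, MeasurableSet[𝓐'] (B j))
    (hdA : Pairwise (Function.onFun Disjoint A)) (hdB : Pairwise (Function.onFun Disjoint B))
    (hcA : (⋃ i, A i) = Set.univ) (hcB : (⋃ j, B j) = Set.univ) :
    ∑ i, ∑ j, |(μ (A i ∩ B j)).toReal - (μ (A i)).toReal * (μ (B j)).toReal|
      ≤ 2 * @betaMix Ω m0 μ 𝓐 𝓐' := by
  classical
  set e : ι ≃ Fin (Fintype.card ι) := Fintype.equivFin ι
  set g : κ ≃ Fin (Fintype.card κ) := Fintype.equivFin κ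
  set A' : Fin (Fintype.card ι) → Set Ω := fun i => A (e.symm i) with hA'
  set B' : Fin (Fintype.card κ) → Set Ω := fun j => B (g.symm j) with hB'
  have hsum : ∑ i, ∑ j, |(μ (A i ∩ B j)).toReal - (μ (A i)).toReal * (μ (B j)).toReal|
      = ∑ i, ∑ j, |(μ (A' i ∩ B' j)).toReal - (μ (A' i)).toReal * (μ (B' j)).toReal| := by
    rw [← Equiv.sum_comp e.symm (fun i =>
      ∑ j, |(μ (A i ∩ B j)).toReal - (μ (A i)).toReal * (μ (B j)).toReal|)]
    refine Finset.sum_congr rfl fun i _ => ?_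
    rw [← Equiv.sum_comp g.symm (fun j =>
      |(μ (A (e.symm i) ∩ B j)).toReal - (μ (A (e.symm i))).toReal * (μ (B j)).toReal|)]
  have hmem : ((1:ℝ) / 2) * ∑ i, ∑ j,
      |(μ (A' i ∩ B' j)).toReal - (μ (A' i)).toReal * (μ (B' j)).toReal|
      ∈ {x : ℝ | ∃ (n m : ℕ) (A : Fin n → Set Ω) (B : Fin m → Set Ω),
      (∀ i, MeasurableSet[𝓐] (A i)) ∧ (∀ j, MeasurableSet[𝓐'] (B j)) ∧
      Pairwise (Function.onFun Disjoint A) ∧ Pairwise (Function.onFun Disjoint B) ∧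
      (⋃ i, A i) = Set.univ ∧ (⋃ j, B j) = Set.univ ∧
      x = (1 / 2) * ∑ i, ∑ j,
        |(μ (A i ∩ B j)).toReal - (μ (A i)).toReal * (μ (B j)).toReal|} := by
    refine ⟨Fintype.card ι, Fintype.card κ, A', B', fun i => hA _, fun j => hB _,
      ?_, ?_, ?_, ?_, rfl⟩
    · intro i j hij
      exact hdA fun h => hij (by simpa using e.symm.injective h)
    · intro i j hij
      exact hdB fun h => hij (by simpa using g.symm.injective h)
    · rw [hA', Function.Surjective.iUnion_comp e.symm.surjective A]; exact hcA
    · rw [hB', Function.Surjective.iUnion_comp g.symm.surjective B]; exact hcB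
  have := le_csSup (bddAbove_betaMix_set h𝓐 h𝓐') hmem
  rw [hsum]
  unfold betaMix at this ⊢
  linarith


section ProdBound

variable {E E' : Type*} [MeasurableSpace E] [MeasurableSpace E']

/-- The deviation of two finite measures on a finite union of rectangles is controlled by
their deviations on the corresponding atom rectangles. -/
lemma abs_sub_rectUnion_le (ν₁ ν₂ : Measure (E × E')) [IsFiniteMeasure ν₁]
    [IsFiniteMeasure ν₂] {n : ℕ} {C : Fin n → Set E} {D : Fin n → Set E'}
    (hC : ∀ k, MeasurableSet (C k)) (hD : ∀ k, MeasurableSet (D k)) :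
    |(ν₁ (⋃ k, C k ×ˢ D k)).toReal - (ν₂ (⋃ k, C k ×ˢ D k)).toReal|
      ≤ ∑ σ : Fin n → Bool, ∑ ρ : Fin n → Bool,
        |(ν₁ (atom C σ ×ˢ atom D ρ)).toReal - (ν₂ (atom C σ ×ˢ atom D ρ)).toReal| := by
  classical
  have hUmeas : MeasurableSet (⋃ k, C k ×ˢ D k) :=
    MeasurableSet.iUnion fun k => (hC k).prod (hD k)
  have hRmeas : ∀ q : (Fin n → Bool) × (Fin n → Bool),
      MeasurableSet (atom C q.1 ×ˢ atom D q.2) := fun q =>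
    (measurableSet_atom hC q.1).prod (measurableSet_atom hD q.2)
  have h1 : (ν₁ (⋃ k, C k ×ˢ D k)).toReal = ∑ q : (Fin n → Bool) × (Fin n → Bool),
      (ν₁ ((⋃ k, C k ×ˢ D k) ∩ (atom C q.1 ×ˢ atom D q.2))).toReal :=
    (sum_part ν₁ hRmeas (pairwise_disjoint_atomRect C D) (iUnion_atomRect C D)
      _ hUmeas).symm
  have h2 : (ν₂ (⋃ k, C k ×ˢ D k)).toReal = ∑ q : (Fin n → Bool) × (Fin n → Bool),
      (ν₂ ((⋃ k, C k ×ˢ D k) ∩ (atom C q.1 ×ˢ atom D q.2))).toReal :=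
    (sum_part ν₂ hRmeas (pairwise_disjoint_atomRect C D) (iUnion_atomRect C D)
      _ hUmeas).symm
  rw [h1, h2, ← Finset.sum_sub_distrib]
  have hstep : |∑ q : (Fin n → Bool) × (Fin n → Bool),
      ((ν₁ ((⋃ k, C k ×ˢ D k) ∩ atom C q.1 ×ˢ atom D q.2)).toReal
        - (ν₂ ((⋃ k, C k ×ˢ D k) ∩ atom C q.1 ×ˢ atom D q.2)).toReal)|
      ≤ ∑ q : (Fin n → Bool) × (Fin n → Bool),
        |(ν₁ (atom C q.1 ×ˢ atom D q.2)).toReal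
          - (ν₂ (atom C q.1 ×ˢ atom D q.2)).toReal| := by
    refine (Finset.abs_sum_le_sum_abs _ _).trans (Finset.sum_le_sum fun q _ => ?_)
    rw [inter_atomRect C D q.1 q.2]
    split_ifs
    · exact le_rfl
    · simp
  refine hstep.trans (le_of_eq ?_)
  exact Fintype.sum_prod_type (f := fun q : (Fin n → Bool) × (Fin n → Bool) =>
    |(ν₁ (atom C q.1 ×ˢ atom D q.2)).toReal - (ν₂ (atom C q.1 ×ˢ atom D q.2)).toReal|)

end ProdBound

section Key

/-- `|ν T - ν U| ≤ ν (symmDiff T U)` for a finite measure, in real form. -/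
lemma abs_toReal_sub_le {α : Type*} {mα : MeasurableSpace α} (ν : Measure α)
    [IsFiniteMeasure ν] (T U : Set α) :
    |(ν T).toReal - (ν U).toReal| ≤ (ν (symmDiff T U)).toReal := by
  have key : ∀ S V : Set α, (ν S).toReal - (ν V).toReal ≤ (ν (symmDiff S V)).toReal := by
    intro S V
    have h1 : ν S ≤ ν V + ν (symmDiff S V) := by
      refine le_trans (measure_mono (fun x hx => ?_)) (measure_union_le _ _)
      by_cases hV : x ∈ V
      · exact Or.inl hV
      · exact Or.inr (Set.mem_union_left _ ⟨hx, hV⟩)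
    have h2 : (ν S).toReal ≤ (ν V).toReal + (ν (symmDiff S V)).toReal := by
      have := ENNReal.toReal_mono (by finiteness) h1
      rwa [ENNReal.toReal_add (measure_ne_top _ _) (measure_ne_top _ _)] at this
    linarith
  have h3 := key T U
  have h4 := key U T
  rw [symmDiff_comm] at h4
  rw [abs_sub_le_iff]
  exact ⟨h3, h4⟩

lemma key_set_bound {Ω E E' : Type*} {m0 : MeasurableSpace Ω}
    [MeasurableSpace E] [MeasurableSpace E']
    {μ : Measure Ω} (hprob : IsProbabilityMeasure μ)
    {𝓐 𝓐' : MeasurableSpace Ω} (h𝓐 : 𝓐 ≤ m0) (h𝓐' : 𝓐' ≤ m0)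
    {Y : Ω → E} {Y' : Ω → E'}
    (hY : @Measurable Ω E 𝓐 _ Y) (hY' : @Measurable Ω E' 𝓐' _ Y')
    {T : Set (E × E')} (hT : MeasurableSet T) :
    |((@MeasureTheory.Measure.map Ω (E × E') m0 _ (fun ω => (Y ω, Y' ω)) μ) T).toReal -
      (((@MeasureTheory.Measure.map Ω E m0 _ Y μ).prod
        (@MeasureTheory.Measure.map Ω E' m0 _ Y' μ)) T).toReal| ≤
      2 * @betaMix Ω m0 μ 𝓐 𝓐' := by
  classical
  have hYm : @Measurable Ω E m0 _ Y := hY.mono h𝓐 le_rfl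
  have hY'm : @Measurable Ω E' m0 _ Y' := hY'.mono h𝓐' le_rfl
  have hpair : @Measurable Ω (E × E') m0 _ (fun ω => (Y ω, Y' ω)) := hYm.prodMk hY'm
  set ν₁ : Measure (E × E') := @MeasureTheory.Measure.map Ω (E × E') m0 _
    (fun ω => (Y ω, Y' ω)) μ with hν₁
  set ν₂ : Measure (E × E') := (@MeasureTheory.Measure.map Ω E m0 _ Y μ).prod
    (@MeasureTheory.Measure.map Ω E' m0 _ Y' μ) with hν₂
  haveI : IsProbabilityMeasure ν₁ := Measure.isProbabilityMeasure_map hpair.aemeasurable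
  haveI : IsProbabilityMeasure (@MeasureTheory.Measure.map Ω E m0 _ Y μ) :=
    Measure.isProbabilityMeasure_map hYm.aemeasurable
  haveI : IsProbabilityMeasure (@MeasureTheory.Measure.map Ω E' m0 _ Y' μ) :=
    Measure.isProbabilityMeasure_map hY'm.aemeasurable
  haveI : IsProbabilityMeasure ν₂ := by rw [hν₂]; infer_instance
  -- bound on finite unions of rectangles
  have hWbound : ∀ W ∈ RectFam E E',
      |(ν₁ W).toReal - (ν₂ W).toReal| ≤ 2 * @betaMix Ω m0 μ 𝓐 𝓐' := by
    rintro W ⟨n, C, D, hC, hD, rfl⟩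
    refine (abs_sub_rectUnion_le ν₁ ν₂ hC hD).trans ?_
    have hval : ∀ (σ ρ : Fin n → Bool),
        |(ν₁ (atom C σ ×ˢ atom D ρ)).toReal - (ν₂ (atom C σ ×ˢ atom D ρ)).toReal|
        = |(μ (Y ⁻¹' atom C σ ∩ Y' ⁻¹' atom D ρ)).toReal
            - (μ (Y ⁻¹' atom C σ)).toReal * (μ (Y' ⁻¹' atom D ρ)).toReal| := by
      intro σ ρ
      have e1 : ν₁ (atom C σ ×ˢ atom D ρ) = μ (Y ⁻¹' atom C σ ∩ Y' ⁻¹' atom D ρ) := by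
        rw [hν₁, Measure.map_apply hpair
          ((measurableSet_atom hC σ).prod (measurableSet_atom hD ρ)),
          Set.mk_preimage_prod]
      have e2 : ν₂ (atom C σ ×ˢ atom D ρ)
          = μ (Y ⁻¹' atom C σ) * μ (Y' ⁻¹' atom D ρ) := by
        rw [hν₂, Measure.prod_prod,
          Measure.map_apply hYm (measurableSet_atom hC σ),
          Measure.map_apply hY'm (measurableSet_atom hD ρ)]
      rw [e1, e2, ENNReal.toReal_mul]
    simp_rw [hval]
    refine sum_le_two_betaMix h𝓐 h𝓐'
      (fun σ => hY (measurableSet_atom hC σ)) (fun ρ => hY' (measurableSet_atom hD ρ))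
      ?_ ?_ ?_ ?_
    · intro σ τ h
      exact (pairwise_disjoint_atom C h).preimage Y
    · intro σ τ h
      exact (pairwise_disjoint_atom D h).preimage Y'
    · rw [← Set.preimage_iUnion, iUnion_atom, Set.preimage_univ]
    · rw [← Set.preimage_iUnion, iUnion_atom, Set.preimage_univ]
  refine le_of_forall_pos_le_add fun ε hε => ?_
  have hdense : (ν₁ + ν₂).MeasureDense (RectFam E E') :=
    Measure.MeasureDense.of_generateFrom_isSetAlgebra_finite (ν₁ + ν₂)
      isSetAlgebra_rectFam generateFrom_rectFam
  obtain ⟨W, hW, hsd⟩ := hdense.approx T hT (measure_ne_top _ _) ε hε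
  have hWb := hWbound W hW
  have hd1 : |(ν₁ T).toReal - (ν₁ W).toReal| ≤ (ν₁ (symmDiff T W)).toReal :=
    abs_toReal_sub_le ν₁ T W
  have hd2 : |(ν₂ T).toReal - (ν₂ W).toReal| ≤ (ν₂ (symmDiff T W)).toReal :=
    abs_toReal_sub_le ν₂ T W
  have hsum : (ν₁ (symmDiff T W)).toReal + (ν₂ (symmDiff T W)).toReal ≤ ε := by
    have h1 : (ν₁ + ν₂) (symmDiff T W) = ν₁ (symmDiff T W) + ν₂ (symmDiff T W) := by
      simp [Measure.add_apply]
    have h2 : ((ν₁ + ν₂) (symmDiff T W)).toReal ≤ ε :=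
      ENNReal.toReal_le_of_le_ofReal hε.le hsd.le
    rwa [h1, ENNReal.toReal_add (measure_ne_top _ _) (measure_ne_top _ _)] at h2
  have habs1 : |(ν₁ T).toReal - (ν₂ T).toReal|
      ≤ |(ν₁ W).toReal - (ν₂ W).toReal|
        + (|(ν₁ T).toReal - (ν₁ W).toReal| + |(ν₂ T).toReal - (ν₂ W).toReal|) := by
    have h3 := abs_abs_sub_abs_le_abs_sub ((ν₁ T).toReal) ((ν₂ T).toReal)
    have a1 := abs_sub_abs_le_abs_sub ((ν₁ T).toReal - (ν₂ T).toReal)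
      ((ν₁ W).toReal - (ν₂ W).toReal)
    have a2 : |((ν₁ T).toReal - (ν₂ T).toReal) - ((ν₁ W).toReal - (ν₂ W).toReal)|
        ≤ |(ν₁ T).toReal - (ν₁ W).toReal| + |(ν₂ T).toReal - (ν₂ W).toReal| := by
      have : ((ν₁ T).toReal - (ν₂ T).toReal) - ((ν₁ W).toReal - (ν₂ W).toReal)
          = ((ν₁ T).toReal - (ν₁ W).toReal) - ((ν₂ T).toReal - (ν₂ W).toReal) := by ring
      rw [this]
      exact abs_sub _ _
    linarith
  linarith

end Key

end BetaMixAux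

/-- The bounded case (`η = ∞`) of Yoshihara's inequality: for `0 ≤ f ≤ M`,
`|E f(Y,Y′) − E f(Ỹ,Ỹ′)| ≤ 2 M β(𝓐,𝓐′)`, where `(Ỹ,Ỹ′)` is an independent pair with
the same marginals as `(Y,Y′)` (so that `E f(Ỹ,Ỹ′)` is the integral of `f` against the
product of the marginal laws). -/
theorem bounded_beta_mixing_inequality {Ω E E' : Type*} {m0 : MeasurableSpace Ω}
    [MeasurableSpace E] [MeasurableSpace E']
    (μ : Measure Ω) (hprob : IsProbabilityMeasure μ)
    (𝓐 𝓐' : MeasurableSpace Ω) (h𝓐 : 𝓐 ≤ m0) (h𝓐' : 𝓐' ≤ m0)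
    (Y : Ω → E) (Y' : Ω → E')
    (hY : @Measurable Ω E 𝓐 _ Y) (hY' : @Measurable Ω E' 𝓐' _ Y')
    (f : E × E' → ℝ) (hf : Measurable f) (M : ℝ)
    (hf0 : ∀ p, 0 ≤ f p) (hfM : ∀ p, f p ≤ M) :
    |(∫ ω, f (Y ω, Y' ω) ∂μ) -
        ∫ p, f p ∂((@MeasureTheory.Measure.map Ω E m0 _ Y μ).prod (@MeasureTheory.Measure.map Ω E' m0 _ Y' μ))| ≤
      2 * M * @betaMix Ω m0 μ 𝓐 𝓐' := by

  classical
  haveI := hprob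
  have hYm : @Measurable Ω E m0 _ Y := hY.mono h𝓐 le_rfl
  have hY'm : @Measurable Ω E' m0 _ Y' := hY'.mono h𝓐' le_rfl
  have hpair : @Measurable Ω (E × E') m0 _ (fun ω => (Y ω, Y' ω)) := hYm.prodMk hY'm
  set ν₁ : Measure (E × E') := @MeasureTheory.Measure.map Ω (E × E') m0 _
    (fun ω => (Y ω, Y' ω)) μ with hν₁
  set ν₂ : Measure (E × E') := (@MeasureTheory.Measure.map Ω E m0 _ Y μ).prod
    (@MeasureTheory.Measure.map Ω E' m0 _ Y' μ) with hν₂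
  haveI : IsProbabilityMeasure ν₁ := Measure.isProbabilityMeasure_map hpair.aemeasurable
  haveI : IsProbabilityMeasure (@MeasureTheory.Measure.map Ω E m0 _ Y μ) :=
    Measure.isProbabilityMeasure_map hYm.aemeasurable
  haveI : IsProbabilityMeasure (@MeasureTheory.Measure.map Ω E' m0 _ Y' μ) :=
    Measure.isProbabilityMeasure_map hY'm.aemeasurable
  haveI : IsProbabilityMeasure ν₂ := by rw [hν₂]; infer_instance
  -- `M ≥ 0` and `β ≥ 0`
  have hΩ : Nonempty Ω := by
    by_contra h
    rw [not_nonempty_iff] at h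
    have h1 : μ Set.univ = 1 := measure_univ
    rw [Set.univ_eq_empty_iff.2 h, measure_empty] at h1
    exact zero_ne_one h1
  obtain ⟨ω0⟩ := hΩ
  have hM0 : 0 ≤ M := le_trans (hf0 (Y ω0, Y' ω0)) (hfM _)
  set β : ℝ := @betaMix Ω m0 μ 𝓐 𝓐' with hβ
  have hβ0 : 0 ≤ β := BetaMixAux.betaMix_nonneg h𝓐 h𝓐'
  -- rewrite the first integral as an integral against `ν₁`
  have hint1 : ∫ ω, f (Y ω, Y' ω) ∂μ = ∫ p, f p ∂ν₁ :=
    (integral_map hpair.aemeasurable hf.aestronglyMeasurable).symm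
  -- layer cake representation on `Ioc 0 M`
  have hlayer : ∀ (ν : Measure (E × E')) (_ : IsProbabilityMeasure ν),
      ∫⁻ p, ENNReal.ofReal (f p) ∂ν = ∫⁻ t in Set.Ioc 0 M, ν {p | t ≤ f p} := by
    intro ν hν
    rw [lintegral_eq_lintegral_meas_le ν (Filter.Eventually.of_forall hf0) hf.aemeasurable]
    rw [← Set.Ioc_union_Ioi_eq_Ioi hM0,
      lintegral_union measurableSet_Ioi (Set.Ioc_disjoint_Ioi le_rfl)]
    have hzero : ∫⁻ t in Set.Ioi M, ν {p | t ≤ f p} = 0 := by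
      have hcong : ∀ t ∈ Set.Ioi M, ν {p | t ≤ f p} = (fun _ => (0 : ENNReal)) t := by
        intro t ht
        have hempty : {p : E × E' | t ≤ f p} = ∅ :=
          Set.eq_empty_of_forall_notMem fun p hp =>
            absurd hp (not_le.2 (lt_of_le_of_lt (hfM p) ht))
        simp [hempty]
      rw [setLIntegral_congr_fun measurableSet_Ioi
        hcong, lintegral_zero]
    rw [hzero, add_zero]
  -- pointwise comparison of tail measures
  have hkey : ∀ t : ℝ,
      ν₁ {p | t ≤ f p} ≤ ν₂ {p | t ≤ f p} + ENNReal.ofReal (2 * β)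
      ∧ ν₂ {p | t ≤ f p} ≤ ν₁ {p | t ≤ f p} + ENNReal.ofReal (2 * β) := by
    intro t
    have hTmeas : MeasurableSet {p : E × E' | t ≤ f p} := measurableSet_le measurable_const hf
    have habs := BetaMixAux.key_set_bound hprob h𝓐 h𝓐' hY hY' hTmeas
    rw [← hν₁, ← hν₂, ← hβ] at habs
    obtain ⟨ha1, ha2⟩ := abs_le.1 habs
    constructor
    · rw [← ENNReal.ofReal_toReal (measure_ne_top ν₁ {p | t ≤ f p}),
        ← ENNReal.ofReal_toReal (measure_ne_top ν₂ {p | t ≤ f p}),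
        ← ENNReal.ofReal_add ENNReal.toReal_nonneg (by linarith)]
      exact ENNReal.ofReal_le_ofReal (by linarith)
    · rw [← ENNReal.ofReal_toReal (measure_ne_top ν₁ {p | t ≤ f p}),
        ← ENNReal.ofReal_toReal (measure_ne_top ν₂ {p | t ≤ f p}),
        ← ENNReal.ofReal_add ENNReal.toReal_nonneg (by linarith)]
      exact ENNReal.ofReal_le_ofReal (by linarith)
  -- compare the lintegrals
  set c : ENNReal := ENNReal.ofReal (2 * β) * ENNReal.ofReal M with hc
  have hcfin : c ≠ ⊤ := ENNReal.mul_ne_top ENNReal.ofReal_ne_top ENNReal.ofReal_ne_top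
  have hcompare : ∀ (ν ν' : Measure (E × E')) (_ : IsProbabilityMeasure ν)
      (_ : IsProbabilityMeasure ν')
      (_ : ∀ t : ℝ, ν {p | t ≤ f p} ≤ ν' {p | t ≤ f p} + ENNReal.ofReal (2 * β)),
      (∫⁻ p, ENNReal.ofReal (f p) ∂ν) ≤ (∫⁻ p, ENNReal.ofReal (f p) ∂ν') + c := by
    intro ν ν' hν hν' hcmp
    rw [hlayer ν hν, hlayer ν' hν']
    calc ∫⁻ t in Set.Ioc 0 M, ν {p | t ≤ f p}
        ≤ ∫⁻ t in Set.Ioc 0 M, (ν' {p | t ≤ f p} + ENNReal.ofReal (2 * β)) :=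
          lintegral_mono fun t => hcmp t
      _ = (∫⁻ t in Set.Ioc 0 M, ν' {p | t ≤ f p})
          + ENNReal.ofReal (2 * β) * volume (Set.Ioc (0:ℝ) M) := by
          rw [lintegral_add_right _ measurable_const, lintegral_const,
            Measure.restrict_apply_univ, mul_comm]
      _ = (∫⁻ t in Set.Ioc 0 M, ν' {p | t ≤ f p}) + c := by
          rw [Real.volume_Ioc, sub_zero]
  have h12 := hcompare ν₁ ν₂ (by infer_instance) (by infer_instance) fun t => (hkey t).1
  have h21 := hcompare ν₂ ν₁ (by infer_instance) (by infer_instance) fun t => (hkey t).2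
  -- finiteness
  have hfin : ∀ (ν : Measure (E × E')) (_ : IsProbabilityMeasure ν),
      (∫⁻ p, ENNReal.ofReal (f p) ∂ν) ≠ ⊤ := by
    intro ν hν
    refine ne_top_of_le_ne_top (b := ENNReal.ofReal M) ENNReal.ofReal_ne_top ?_
    calc ∫⁻ p, ENNReal.ofReal (f p) ∂ν
        ≤ ∫⁻ _, ENNReal.ofReal M ∂ν := lintegral_mono fun p =>
          ENNReal.ofReal_le_ofReal (hfM p)
      _ = ENNReal.ofReal M := by simp [lintegral_const]
  have hfin1 := hfin ν₁ (by infer_instance)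
  have hfin2 := hfin ν₂ (by infer_instance)
  -- Bochner integrals as lintegrals
  have hb1 : ∫ p, f p ∂ν₁ = (∫⁻ p, ENNReal.ofReal (f p) ∂ν₁).toReal :=
    integral_eq_lintegral_of_nonneg_ae (Filter.Eventually.of_forall hf0)
      hf.aestronglyMeasurable
  have hb2 : ∫ p, f p ∂ν₂ = (∫⁻ p, ENNReal.ofReal (f p) ∂ν₂).toReal :=
    integral_eq_lintegral_of_nonneg_ae (Filter.Eventually.of_forall hf0)
      hf.aestronglyMeasurable
  have hctoReal : c.toReal = 2 * M * β := by
    rw [hc, ENNReal.toReal_mul, ENNReal.toReal_ofReal (by linarith),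
      ENNReal.toReal_ofReal hM0]
    ring
  have ht1 : (∫⁻ p, ENNReal.ofReal (f p) ∂ν₁).toReal
      ≤ (∫⁻ p, ENNReal.ofReal (f p) ∂ν₂).toReal + c.toReal := by
    have := ENNReal.toReal_mono (ENNReal.add_ne_top.2 ⟨hfin2, hcfin⟩) h12
    rwa [ENNReal.toReal_add hfin2 hcfin] at this
  have ht2 : (∫⁻ p, ENNReal.ofReal (f p) ∂ν₂).toReal
      ≤ (∫⁻ p, ENNReal.ofReal (f p) ∂ν₁).toReal + c.toReal := by
    have := ENNReal.toReal_mono (ENNReal.add_ne_top.2 ⟨hfin1, hcfin⟩) h21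
    rwa [ENNReal.toReal_add hfin1 hcfin] at this
  rw [hint1, hb1, hb2, ← hctoReal]
  rw [abs_sub_le_iff]
  exact ⟨by linarith, by linarith⟩
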